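/- Let a₁₁,…,aₙₙ be pairwise distinct positive reals, let F(x₁,…,xₙ) := Σᵢ aᵢᵢ xᵢ² − 1, so that E := {F ≤ 0} is an ellipsoid centred at the origin with pairwise different axis lengths, and let d₁,…,dₙ > 0 satisfy Σᵢ aᵢᵢ dᵢ² = 1, so that the points v₁,…,v_{2ⁿ}, namely (±d₁,…,±dₙ), are the vertices of a box inscribed in E. Define the analytic map f : SO(n) → ℝ^{2ⁿ} by f(A) = (F(A v₁),…,F(A v_{2ⁿ})). Then the differential of f at the identity matrix has full rank n(n−1)/2, and the image of this differential meets the diagonal Δ = {(λ,…,λ) : λ ∈ ℝ} of ℝ^{2ⁿ} only at the origin; explicitly, for every nonzero skew-symmetric n×n matrix D = (dα_{ij}), the numbers 2·Σ_{i<j} (aᵢᵢ − a_{jj}) dα_{ij} xᵢ x_j, as (x₁,…,xₙ) ranges over the 2ⁿ points (±d₁,…,±dₙ), are not all equal. -/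
import Mathlib


noncomputable section

/-- Let `E = {x | ∑ i, a i * x i ^ 2 ≤ 1}` be an ellipsoid centred at the
origin with pairwise different (positive) coefficients `a i`, and let `(±d₁, …, ±dₙ)`
(`d i > 0`, `∑ i, a i * d i ^ 2 = 1`) be the vertices of an inscribed box.  Consider the map
`f : SO(n) → ℝ^{2ⁿ}`, `f A = (F (A v₁), …, F (A v_{2ⁿ}))` with `F x = ∑ i, a i * x i ^ 2 - 1`.
Its differential at the identity sends a skew-symmetric matrix `D` to the vector whose
coordinate at the vertex `x = (ε₁ d₁, …, εₙ dₙ)` is `2 ∑_{i<j} (a i - a j) D i j * x i * x j`;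
the claim (full rank `n(n-1)/2` and image meeting the diagonal of `ℝ^{2ⁿ}` only at the origin)
is that, for every nonzero skew-symmetric `D`, these `2ⁿ` numbers are not all equal. -/
theorem inscribed_box_transversality
    (n : ℕ) (a : Fin n → ℝ) (ha : ∀ i, 0 < a i)
    (hadist : ∀ i j, i ≠ j → a i ≠ a j)
    (d : Fin n → ℝ) (hd : ∀ i, 0 < d i)
    (hnorm : ∑ i, a i * d i ^ 2 = 1)
    (D : Matrix (Fin n) (Fin n) ℝ) (hskew : D.transpose = -D) (hD : D ≠ 0) :
    ¬ ∃ lam : ℝ, ∀ ε : Fin n → ℝ, (∀ i, ε i = 1 ∨ ε i = -1) →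
      2 * (∑ i, ∑ j, if i < j then
        (a i - a j) * D i j * (ε i * d i) * (ε j * d j) else 0) = lam := by
  rintro ⟨lam, h⟩
  obtain ⟨k, l, hkl, hDkl⟩ : ∃ k l : Fin n, k < l ∧ D k l ≠ 0 := by
    by_contra hcon
    push_neg at hcon
    apply hD
    ext i j
    have hts : ∀ p q : Fin n, D p q = - D q p := by
      intro p q
      have := congrFun (congrFun hskew q) p
      simpa [Matrix.transpose_apply] using this
    rcases lt_trichotomy i j with hij | rfl | hij
    · simpa using hcon i j hij
    · have := hts i i; simp; linarith
    · have h1 := hcon j i hij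
      have := hts i j
      simp [this, h1]
  have hne : k ≠ l := ne_of_lt hkl
  set ε1 : Fin n → ℝ := fun _ => 1 with hε1
  set ε2 : Fin n → ℝ := fun i => if i = k ∨ i = l then -1 else 1 with hε2
  set ε3 : Fin n → ℝ := fun i => if i = k then -1 else 1 with hε3
  set ε4 : Fin n → ℝ := fun i => if i = l then -1 else 1 with hε4
  have key : ∀ i j : Fin n,
      (if i < j then (a i - a j) * D i j * (ε1 i * d i) * (ε1 j * d j) else 0)
      + (if i < j then (a i - a j) * D i j * (ε2 i * d i) * (ε2 j * d j) else 0)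
      - (if i < j then (a i - a j) * D i j * (ε3 i * d i) * (ε3 j * d j) else 0)
      - (if i < j then (a i - a j) * D i j * (ε4 i * d i) * (ε4 j * d j) else 0)
      = if i = k ∧ j = l then 4 * ((a k - a l) * D k l * d k * d l) else 0 := by
    clear h hnorm hD hskew
    intro i j
    by_cases hij : i < j
    · by_cases hik : i = k <;> by_cases hil : i = l <;> by_cases hjk : j = k <;>
        by_cases hjl : j = l <;>
        simp only [hε1, hε2, hε3, hε4] <;>
        simp only [hik, hil, hjk, hjl, if_true, if_false, eq_self_iff_true] <;>
        simp_all [hne, Ne.symm hne] <;> first | exact absurd (hij.trans hkl) (lt_irrefl _) | ring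
    · have : ¬ (i = k ∧ j = l) := by rintro ⟨rfl, rfl⟩; exact hij hkl
      simp [hij, this]
  have h1 := h ε1 (fun i => Or.inl rfl)
  have h2 := h ε2 (fun i => by by_cases hi : i = k ∨ i = l <;> simp [hε2, hi])
  have h3 := h ε3 (fun i => by by_cases hi : i = k <;> simp [hε3, hi])
  have h4 := h ε4 (fun i => by by_cases hi : i = l <;> simp [hε4, hi])
  have hsum : (∑ i, ∑ j, if i < j then (a i - a j) * D i j * (ε1 i * d i) * (ε1 j * d j) else 0)
      + (∑ i, ∑ j, if i < j then (a i - a j) * D i j * (ε2 i * d i) * (ε2 j * d j) else 0)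
      - (∑ i, ∑ j, if i < j then (a i - a j) * D i j * (ε3 i * d i) * (ε3 j * d j) else 0)
      - (∑ i, ∑ j, if i < j then (a i - a j) * D i j * (ε4 i * d i) * (ε4 j * d j) else 0)
      = 4 * ((a k - a l) * D k l * d k * d l) := by
    rw [← Finset.sum_add_distrib, ← Finset.sum_sub_distrib, ← Finset.sum_sub_distrib]
    have : ∀ i : Fin n,
        ((∑ j, if i < j then (a i - a j) * D i j * (ε1 i * d i) * (ε1 j * d j) else 0)
        + (∑ j, if i < j then (a i - a j) * D i j * (ε2 i * d i) * (ε2 j * d j) else 0)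
        - (∑ j, if i < j then (a i - a j) * D i j * (ε3 i * d i) * (ε3 j * d j) else 0)
        - (∑ j, if i < j then (a i - a j) * D i j * (ε4 i * d i) * (ε4 j * d j) else 0))
        = ∑ j, if i = k ∧ j = l then 4 * ((a k - a l) * D k l * d k * d l) else 0 := by
      intro i
      rw [← Finset.sum_add_distrib, ← Finset.sum_sub_distrib, ← Finset.sum_sub_distrib]
      exact Finset.sum_congr rfl (fun j _ => key i j)
    rw [Finset.sum_congr rfl (fun i _ => this i)]
    simp [ite_and, Finset.sum_ite_eq']
  have hc : (a k - a l) * D k l * d k * d l = 0 := by linarith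
  have hak : a k - a l ≠ 0 := sub_ne_zero.mpr (hadist k l hne)
  have : D k l * d k * d l = 0 := by
    rcases mul_eq_zero.mp hc with h' | h'
    · rcases mul_eq_zero.mp h' with h'' | h''
      · rcases mul_eq_zero.mp h'' with h3 | h3
        · exact absurd h3 hak
        · simp [h3]
      · simp [h'']
    · exact absurd h' (ne_of_gt (hd l))
  rcases mul_eq_zero.mp this with h' | h'
  · rcases mul_eq_zero.mp h' with h'' | h''
    · exact hDkl h''
    · exact absurd h'' (ne_of_gt (hd k))
  · exact absurd h' (ne_of_gt (hd l))
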